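/- There exists a constant c > 0 such that for every k ∈ ℤ² there exists ℓ ∈ ℤ² with |ℓ| ≤ √2 and |⟨ℓ,k⟩| · |⟨ℓ,k⊥⟩| ≥ c·|k|². -/

import Mathlib

/-- Squared Euclidean norm of a lattice point `k ∈ ℤ²`. -/
noncomputable def nsq (k : ℤ × ℤ) : ℝ := (k.1 : ℝ) ^ 2 + (k.2 : ℝ) ^ 2

/-- Standard inner product on `ℝ²` of two lattice points. -/
noncomputable def dotp (k l : ℤ × ℤ) : ℝ := (k.1 : ℝ) * (l.1 : ℝ) + (k.2 : ℝ) * (l.2 : ℝ)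

/-- The rotation `k⊥ = (k₂, −k₁)`. -/
def perp (k : ℤ × ℤ) : ℤ × ℤ := (k.2, -k.1)

/-- Key sub-claim of the geometric non-degeneracy lemma: there is `c > 0` such that for every
`k ∈ ℤ²` there exists `ℓ ∈ ℤ²` with `|ℓ| ≤ √2` and `|⟨ℓ,k⟩| · |⟨ℓ,k⊥⟩| ≥ c |k|²`. -/
theorem exists_nondegenerate_direction :
    ∃ c : ℝ, 0 < c ∧ ∀ k : ℤ × ℤ, ∃ ℓ : ℤ × ℤ,
      nsq ℓ ≤ 2 ∧ c * nsq k ≤ |dotp ℓ k| * |dotp ℓ (perp k)| := by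
  refine ⟨1/3, by norm_num, fun k => ?_⟩
  set x : ℝ := (k.1 : ℝ)
  set y : ℝ := (k.2 : ℝ)
  have hn : nsq k = x ^ 2 + y ^ 2 := rfl
  by_cases h : (x ^ 2 + y ^ 2) / 3 ≤ |x * y|
  · refine ⟨(1, 0), by norm_num [nsq], ?_⟩
    have h1 : dotp (1, 0) k = x := by simp [dotp]; rfl
    have h2 : dotp (1, 0) (perp k) = y := by simp [dotp, perp]; rfl
    rw [h1, h2, ← abs_mul, hn]
    linarith
  · push_neg at h
    refine ⟨(1, 1), by norm_num [nsq], ?_⟩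
    have h1 : dotp (1, 1) k = x + y := by simp [dotp]; rfl
    have h2 : dotp (1, 1) (perp k) = y - x := by simp [dotp, perp]; ring
    rw [h1, h2, ← abs_mul, hn]
    have hA : 0 ≤ |(x + y) * (y - x)| := abs_nonneg _
    have hsA : |(x + y) * (y - x)| ^ 2 = ((x + y) * (y - x)) ^ 2 := sq_abs _
    have hsB : |x * y| ^ 2 = (x * y) ^ 2 := sq_abs _
    have hB : 0 ≤ |x * y| := abs_nonneg _
    nlinarith [sq_nonneg (x ^ 2 + y ^ 2), sq_nonneg x, sq_nonneg y,
      mul_self_nonneg (|(x + y) * (y - x)| - (x ^ 2 + y ^ 2) / 3)]
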